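/- Let a, b, c, O be complex numbers with O² = a² + b² + c² − 2ab − 2ac − 2bc, with (c + a − b + O)(a − c + b + O) ≠ 0, with neither (a + b + c + O)/2 + 1 nor (a + b + c − O)/2 + 1 a nonpositive integer, and with none of a, b + 1, c + 1 a nonpositive integer. Then ₃F₂(a, b, c; (a + b + c + O)/2 + 1, (a + b + c − O)/2 + 1; 1) = 2 (a − c − b + O) Γ((a + b + c − O)/2 + 1) Γ((a + b + c + O)/2 + 1) / ( (c + a − b + O)(a − c + b + O) Γ(b + 1) Γ(c + 1) Γ(a) ). (The parametric excess equals 2, so the series converges.) -/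

import Mathlib

open Complex Finset

/-- The generalized hypergeometric series ₃F₂(a₁,a₂,a₃; b₁,b₂; 1) over ℂ. -/
noncomputable def hyp3F2 (a₁ a₂ a₃ b₁ b₂ : ℂ) : ℂ :=
  ∑' k : ℕ,
    ((ascPochhammer ℂ k).eval a₁ * (ascPochhammer ℂ k).eval a₂ * (ascPochhammer ℂ k).eval a₃) /
    ((ascPochhammer ℂ k).eval b₁ * (ascPochhammer ℂ k).eval b₂ * (Nat.factorial k : ℂ))

/-- `x` is not a nonpositive integer (equivalently, not a pole of Γ). -/
def NotNonposInt (x : ℂ) : Prop := ∀ m : ℕ, x ≠ -(m : ℂ)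

open Filter

lemma poch_eval_prod (x : ℂ) (n : ℕ) :
    (ascPochhammer ℂ n).eval x = ∏ j ∈ range n, (x + j) := by
  induction n with
  | zero => simp
  | succ n ih => rw [ascPochhammer_succ_eval, ih, prod_range_succ]

lemma poch_ne_zero {x : ℂ} (hx : ∀ j : ℕ, x + j ≠ 0) (n : ℕ) :
    (ascPochhammer ℂ n).eval x ≠ 0 := by
  rw [poch_eval_prod]; exact prod_ne_zero_iff.mpr fun j _ => hx j

lemma step_frac (A B C E F q m ea fa a b c : ℂ)
    (hq : q ≠ 0) (hE : E ≠ 0) (hF : F ≠ 0) (hea : ea ≠ 0) (hfa : fa ≠ 0)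
    (hm : m ≠ 0) (habc : a*b*c ≠ 0)
    (hid : ea * fa * m + a*b*c = (a+m)*(b+m)*(c+m)) :
    A*B*C/(a*b*c*E*F*q) + (A*B*C)/((E*ea)*(F*fa)*(q*m)) =
      (A*(a+m))*(B*(b+m))*(C*(c+m))/(a*b*c*(E*ea)*(F*fa)*(q*m)) := by
  rw [div_add_div _ _ (mul_ne_zero (mul_ne_zero (mul_ne_zero habc hE) hF) hq)
      (mul_ne_zero (mul_ne_zero (mul_ne_zero hE hea) (mul_ne_zero hF hfa)) (mul_ne_zero hq hm)),
    div_eq_div_iff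
      (mul_ne_zero (mul_ne_zero (mul_ne_zero (mul_ne_zero habc hE) hF) hq)
        (mul_ne_zero (mul_ne_zero (mul_ne_zero hE hea) (mul_ne_zero hF hfa)) (mul_ne_zero hq hm)))
      (mul_ne_zero (mul_ne_zero (mul_ne_zero habc (mul_ne_zero hE hea)) (mul_ne_zero hF hfa))
        (mul_ne_zero hq hm))]
  linear_combination (A*B*C*E^2*F^2*q^2*ea*fa*m*(a*b*c)) * hid

lemma key_sum (a b c e f : ℂ) (habc : a*b*c ≠ 0)
    (hE : ∀ j : ℕ, e + j ≠ 0) (hF : ∀ j : ℕ, f + j ≠ 0)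
    (hstep : ∀ n : ℕ, (e + n) * (f + n) * ((n:ℂ)+1) + a*b*c
      = (a + ((n:ℂ)+1)) * (b + ((n:ℂ)+1)) * (c + ((n:ℂ)+1))) (n : ℕ) :
    ∑ k ∈ range (n+1),
      ((ascPochhammer ℂ k).eval a * (ascPochhammer ℂ k).eval b * (ascPochhammer ℂ k).eval c) /
      ((ascPochhammer ℂ k).eval e * (ascPochhammer ℂ k).eval f * (Nat.factorial k : ℂ))
      = ((ascPochhammer ℂ (n+1)).eval a * (ascPochhammer ℂ (n+1)).eval b *
          (ascPochhammer ℂ (n+1)).eval c) /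
        (a * b * c * (ascPochhammer ℂ n).eval e * (ascPochhammer ℂ n).eval f *
          (Nat.factorial n : ℂ)) := by
  induction n with
  | zero =>
    simp [ascPochhammer_one]
    rw [eq_comm, div_self habc]
  | succ n ih =>
    rw [sum_range_succ, ih]
    rw [ascPochhammer_succ_eval (S := ℂ) (n+1) a, ascPochhammer_succ_eval (S := ℂ) (n+1) b,
      ascPochhammer_succ_eval (S := ℂ) (n+1) c, ascPochhammer_succ_eval (S := ℂ) n e,
      ascPochhammer_succ_eval (S := ℂ) n f, ascPochhammer_succ_eval (S := ℂ) n a,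
      ascPochhammer_succ_eval (S := ℂ) n b, ascPochhammer_succ_eval (S := ℂ) n c]
    have hfac : ((Nat.factorial (n+1) : ℕ) : ℂ) = (Nat.factorial n : ℂ) * ((n:ℂ)+1) := by
      rw [Nat.factorial_succ]; push_cast; ring
    rw [hfac]
    have := step_frac ((ascPochhammer ℂ n).eval a * (a + n)) ((ascPochhammer ℂ n).eval b * (b + n))
      ((ascPochhammer ℂ n).eval c * (c + n)) ((ascPochhammer ℂ n).eval e)
      ((ascPochhammer ℂ n).eval f) (Nat.factorial n : ℂ) ((n:ℂ)+1) (e + n) (f + n) a b c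
      (Nat.cast_ne_zero.mpr (Nat.factorial_ne_zero n)) (poch_ne_zero hE n) (poch_ne_zero hF n)
      (hE n) (hF n) (by
        have : ((n:ℂ)+1) = ((n+1 : ℕ) : ℂ) := by push_cast; ring
        rw [this]; exact Nat.cast_ne_zero.mpr (Nat.succ_ne_zero n)) habc (hstep n)
    convert this using 2 <;> push_cast <;> ring

lemma T_gammaSeq (a b c e f : ℂ) (hef : e + f = a + b + c + 2)
    (hA : ∀ j : ℕ, a + j ≠ 0) (hB : ∀ j : ℕ, b + j ≠ 0) (hC : ∀ j : ℕ, c + j ≠ 0)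
    (hE : ∀ j : ℕ, e + j ≠ 0) (hF : ∀ j : ℕ, f + j ≠ 0)
    (n : ℕ) (hn : 1 ≤ n) :
    ((ascPochhammer ℂ (n+1)).eval a * (ascPochhammer ℂ (n+1)).eval b *
      (ascPochhammer ℂ (n+1)).eval c) /
    ((ascPochhammer ℂ (n+1)).eval e * (ascPochhammer ℂ (n+1)).eval f *
      (Nat.factorial (n+1) : ℂ)) =
    (Complex.GammaSeq e n * Complex.GammaSeq f n /
      (Complex.GammaSeq a n * Complex.GammaSeq b n * Complex.GammaSeq c n)) /
    ((n:ℂ)^2 * ((n:ℂ)+1)) := by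
  have hN : (n:ℂ) ≠ 0 := Nat.cast_ne_zero.mpr (by omega)
  have hpow : (n:ℂ) ^ e * (n:ℂ) ^ f = (n:ℂ) ^ a * (n:ℂ) ^ b * (n:ℂ) ^ c * (n:ℂ)^2 := by
    rw [← Complex.cpow_add _ _ hN, hef]
    rw [show a + b + c + 2 = a + (b + (c + 2)) by ring]
    rw [Complex.cpow_add _ _ hN, Complex.cpow_add _ _ hN, Complex.cpow_add _ _ hN]
    rw [show (2:ℂ) = ((2:ℕ):ℂ) by norm_num, Complex.cpow_natCast]
    ring
  have hcne : ∀ z : ℂ, (n:ℂ) ^ z ≠ 0 := fun z => by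
    simp [Complex.cpow_eq_zero_iff, hN]
  have hprod : ∀ {x : ℂ}, (∀ j : ℕ, x + j ≠ 0) → ∀ m : ℕ, (∏ j ∈ range m, (x + j)) ≠ 0 :=
    fun hx m => prod_ne_zero_iff.mpr fun j _ => hx j
  have hq : ((Nat.factorial n : ℕ) : ℂ) ≠ 0 := Nat.cast_ne_zero.mpr (Nat.factorial_ne_zero n)
  have hfac : ((Nat.factorial (n+1) : ℕ) : ℂ) = (Nat.factorial n : ℂ) * ((n:ℂ)+1) := by
    rw [Nat.factorial_succ]; push_cast; ring
  have hm : ((n:ℂ)+1) ≠ 0 := by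
    have : ((n:ℂ)+1) = ((n+1 : ℕ) : ℂ) := by push_cast; ring
    rw [this]; exact Nat.cast_ne_zero.mpr (Nat.succ_ne_zero n)
  rw [poch_eval_prod, poch_eval_prod, poch_eval_prod, poch_eval_prod, poch_eval_prod, hfac]
  unfold Complex.GammaSeq
  have hPa := hprod hA (n+1); have hPb := hprod hB (n+1); have hPc := hprod hC (n+1)
  have hPe := hprod hE (n+1); have hPf := hprod hF (n+1)
  have hPa' := hprod hA n; have hPb' := hprod hB n; have hPc' := hprod hC n
  have h1 := hcne a; have h2 := hcne b; have h3 := hcne c; have h4 := hcne e; have h5 := hcne f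
  set N := (n:ℂ)
  set q := ((Nat.factorial n : ℕ) : ℂ)
  set Pa := ∏ j ∈ range (n+1), (a + (j:ℂ))
  set Pb := ∏ j ∈ range (n+1), (b + (j:ℂ))
  set Pc := ∏ j ∈ range (n+1), (c + (j:ℂ))
  set Pe := ∏ j ∈ range (n+1), (e + (j:ℂ))
  set Pf := ∏ j ∈ range (n+1), (f + (j:ℂ))
  have hX : N^e*q/Pe * (N^f*q/Pf) / (N^a*q/Pa * (N^b*q/Pb) * (N^c*q/Pc))
      = Pa*Pb*Pc*N^2/(Pe*Pf*q) := by
    rw [div_eq_iff (mul_ne_zero (mul_ne_zero (div_ne_zero (mul_ne_zero h1 hq) hPa)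
      (div_ne_zero (mul_ne_zero h2 hq) hPb)) (div_ne_zero (mul_ne_zero h3 hq) hPc))]
    field_simp
    linear_combination hpow
  rw [hX, div_div]
  rw [div_eq_div_iff (mul_ne_zero (mul_ne_zero hPe hPf) (mul_ne_zero hq hm))
    (mul_ne_zero (mul_ne_zero (mul_ne_zero hPe hPf) hq) (mul_ne_zero (pow_ne_zero 2 hN) hm))]
  ring

lemma cinv_tendsto : Tendsto (fun n : ℕ => ((n:ℂ))⁻¹) atTop (nhds 0) := by
  rw [tendsto_zero_iff_norm_tendsto_zero]
  simpa using tendsto_one_div_atTop_nhds_zero_nat (𝕜 := ℝ)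

theorem stmt19 (a b c O : ℂ)
    (hO : O^2 = a^2 + b^2 + c^2 - 2*a*b - 2*a*c - 2*b*c)
    (hne : (c + a - b + O) * (a - c + b + O) ≠ 0)
    (hb1 : NotNonposInt ((a + b + c + O)/2 + 1))
    (hb2 : NotNonposInt ((a + b + c - O)/2 + 1))
    (g1 : NotNonposInt a) (g2 : NotNonposInt (b + 1)) (g3 : NotNonposInt (c + 1)) :
    hyp3F2 a b c ((a + b + c + O)/2 + 1) ((a + b + c - O)/2 + 1) =
      2 * (a - c - b + O) * Complex.Gamma ((a + b + c - O)/2 + 1) *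
          Complex.Gamma ((a + b + c + O)/2 + 1) /
        ((c + a - b + O) * (a - c + b + O) * Complex.Gamma (b + 1) * Complex.Gamma (c + 1) *
          Complex.Gamma a) := by
  have tsum_one : ∀ e f : ℂ, (b = 0 ∨ c = 0) → hyp3F2 a b c e f = 1 := by
    intro e f hbc
    rw [hyp3F2, tsum_eq_single 0 ?_]
    · simp
    · intro k hk
      rcases hbc with h | h <;>
        rw [h, ascPochhammer_ne_zero_eval_zero (S := ℂ) hk] <;> simp
  by_cases hb : b = 0
  · subst hb
    have hOac : O = a - c := by
      have h0 : (O - (a - c)) * (O + (a - c)) = 0 := by linear_combination hO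
      rcases mul_eq_zero.mp h0 with h | h
      · linear_combination h
      · exfalso
        exact hne (by rw [show (c + a - 0 + O) * (a - c + 0 + O) = (c + a + O) * (O + (a-c)) by
          ring, h, mul_zero])
    have ha : a ≠ 0 := by
      intro h
      exact hne (by rw [hOac, h]; ring_nf)
    have hac : a - c ≠ 0 := by
      intro h
      exact hne (by rw [hOac]; rw [show (c + a - 0 + (a-c)) * (a - c + 0 + (a-c)) =
        (c + a + (a - c)) * (2 * (a-c)) by ring, h]; ring)
    rw [tsum_one _ _ (Or.inl rfl)]
    rw [show (a + 0 + c + O)/2 + 1 = a + 1 by rw [hOac]; ring,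
        show (a + 0 + c - O)/2 + 1 = c + 1 by rw [hOac]; ring, hOac]
    rw [Complex.Gamma_add_one a ha, show (0:ℂ) + 1 = 1 by ring, Complex.Gamma_one]
    have hGa : Complex.Gamma a ≠ 0 := Complex.Gamma_ne_zero g1
    have hGc : Complex.Gamma (c+1) ≠ 0 := Complex.Gamma_ne_zero g3
    have h2a : c + a - 0 + (a - c) ≠ 0 := fun h => ha (by linear_combination h/2)
    have h2ac : a - c + 0 + (a - c) ≠ 0 := fun h => hac (by linear_combination h/2)
    rw [eq_comm, div_eq_one_iff_eq (by
      exact mul_ne_zero (mul_ne_zero (mul_ne_zero (mul_ne_zero h2a h2ac) one_ne_zero) hGc) hGa)]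
    ring
  by_cases hc : c = 0
  · subst hc
    have hOab : O = a - b := by
      have h0 : (O - (a - b)) * (O + (a - b)) = 0 := by linear_combination hO
      rcases mul_eq_zero.mp h0 with h | h
      · linear_combination h
      · exfalso
        exact hne (by rw [show (0 + a - b + O) * (a - 0 + b + O) = (O + (a-b)) * (a + b + O) by
          ring, h, zero_mul])
    have ha : a ≠ 0 := by
      intro h
      exact hne (by rw [hOab, h]; ring_nf)
    have hab : a - b ≠ 0 := by
      intro h
      exact hne (by rw [hOab, show (0 + a - b + (a-b)) * (a - 0 + b + (a-b)) =
        ((a - b) + (a - b)) * (a + b + (a-b)) by ring, h]; ring)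
    rw [tsum_one _ _ (Or.inr rfl)]
    rw [show (a + b + 0 + O)/2 + 1 = a + 1 by rw [hOab]; ring,
        show (a + b + 0 - O)/2 + 1 = b + 1 by rw [hOab]; ring, hOab]
    rw [Complex.Gamma_add_one a ha, show (0:ℂ) + 1 = 1 by ring, Complex.Gamma_one]
    have hGa : Complex.Gamma a ≠ 0 := Complex.Gamma_ne_zero g1
    have hGb : Complex.Gamma (b+1) ≠ 0 := Complex.Gamma_ne_zero g2
    have h2ab : 0 + a - b + (a - b) ≠ 0 := fun h => hab (by linear_combination h/2)
    have h2a : a - 0 + b + (a - b) ≠ 0 := fun h => ha (by linear_combination h/2)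
    rw [eq_comm, div_eq_one_iff_eq (by
      exact mul_ne_zero (mul_ne_zero (mul_ne_zero (mul_ne_zero h2ab h2a) hGb) one_ne_zero) hGa)]
    ring
  -- main case
  set e := (a + b + c + O)/2 + 1 with he_def
  set f := (a + b + c - O)/2 + 1 with hf_def
  have prodid : (c + a - b + O) * (a - c + b + O) = 2*a*(a - b - c + O) := by
    linear_combination hO
  rw [prodid] at hne
  have ha : a ≠ 0 := fun h => hne (by rw [h]; ring)
  have hK : a - b - c + O ≠ 0 := fun h => hne (by rw [h]; ring)
  have habc : a*b*c ≠ 0 := mul_ne_zero (mul_ne_zero ha hb) hc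
  have hAj : ∀ j : ℕ, a + (j:ℂ) ≠ 0 := fun j h => g1 j (by linear_combination h)
  have hBj : ∀ j : ℕ, b + (j:ℂ) ≠ 0 := by
    intro j
    cases j with
    | zero => simpa using hb
    | succ m =>
      intro h
      apply g2 m
      push_cast at h ⊢
      linear_combination h
  have hCj : ∀ j : ℕ, c + (j:ℂ) ≠ 0 := by
    intro j
    cases j with
    | zero => simpa using hc
    | succ m =>
      intro h
      apply g3 m
      push_cast at h ⊢
      linear_combination h
  have hEj : ∀ j : ℕ, e + (j:ℂ) ≠ 0 := fun j h => hb1 j (by linear_combination h)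
  have hFj : ∀ j : ℕ, f + (j:ℂ) ≠ 0 := fun j h => hb2 j (by linear_combination h)
  have hbn : ∀ m : ℕ, b ≠ -(m:ℂ) := fun m h => hBj m (by rw [h]; ring)
  have hcn : ∀ m : ℕ, c ≠ -(m:ℂ) := fun m h => hCj m (by rw [h]; ring)
  have hstep : ∀ n : ℕ, (e + n) * (f + n) * ((n:ℂ)+1) + a*b*c
      = (a + ((n:ℂ)+1)) * (b + ((n:ℂ)+1)) * (c + ((n:ℂ)+1)) := fun n => by
    rw [he_def, hf_def]; linear_combination (-((n:ℂ)+1)/4) * hO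
  have hef : e + f = a + b + c + 2 := by rw [he_def, hf_def]; ring
  set T : ℕ → ℂ := fun k =>
    ((ascPochhammer ℂ k).eval a * (ascPochhammer ℂ k).eval b * (ascPochhammer ℂ k).eval c) /
    ((ascPochhammer ℂ k).eval e * (ascPochhammer ℂ k).eval f * (Nat.factorial k : ℂ))
    with hT_def
  set Q : ℕ → ℂ := fun n =>
    Complex.GammaSeq e n * Complex.GammaSeq f n /
      (Complex.GammaSeq a n * Complex.GammaSeq b n * Complex.GammaSeq c n) with hQ_def
  have hGabc : Complex.Gamma a * Complex.Gamma b * Complex.Gamma c ≠ 0 :=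
    mul_ne_zero (mul_ne_zero (Complex.Gamma_ne_zero g1) (Complex.Gamma_ne_zero hbn))
      (Complex.Gamma_ne_zero hcn)
  set G : ℂ := Complex.Gamma e * Complex.Gamma f /
    (Complex.Gamma a * Complex.Gamma b * Complex.Gamma c) with hG_def
  have hQ : Filter.Tendsto Q atTop (nhds G) :=
    (((Complex.GammaSeq_tendsto_Gamma e).mul (Complex.GammaSeq_tendsto_Gamma f)).div
      (((Complex.GammaSeq_tendsto_Gamma a).mul (Complex.GammaSeq_tendsto_Gamma b)).mul
        (Complex.GammaSeq_tendsto_Gamma c)) hGabc)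
  -- the term via GammaSeq
  have hTn : ∀ n : ℕ, 1 ≤ n → T (n+1) = Q n / ((n:ℂ)^2 * ((n:ℂ)+1)) := fun n hn =>
    T_gammaSeq a b c e f hef hAj hBj hCj hEj hFj n hn
  -- the partial sums
  have hsum_eq : ∀ n : ℕ, 1 ≤ n → ∑ k ∈ range (n+1), T k
      = Q n * (e+(n:ℂ)) * (f+(n:ℂ)) / ((n:ℂ)^2 * (a*b*c)) := by
    intro n hn
    have hN : (n:ℂ) ≠ 0 := Nat.cast_ne_zero.mpr (by omega)
    have hm : ((n:ℂ)+1) ≠ 0 := by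
      have : ((n:ℂ)+1) = ((n+1 : ℕ) : ℂ) := by push_cast; ring
      rw [this]; exact Nat.cast_ne_zero.mpr (Nat.succ_ne_zero n)
    have hq : ((Nat.factorial n : ℕ) : ℂ) ≠ 0 := Nat.cast_ne_zero.mpr (Nat.factorial_ne_zero n)
    have hfac : ((Nat.factorial (n+1) : ℕ) : ℂ) = (Nat.factorial n : ℂ) * ((n:ℂ)+1) := by
      rw [Nat.factorial_succ]; push_cast; ring
    have hE := poch_ne_zero hEj n
    have hF := poch_ne_zero hFj n
    have hT1 := hTn n hn
    rw [hT_def] at hT1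
    simp only at hT1
    rw [ascPochhammer_succ_eval (S := ℂ) n e, ascPochhammer_succ_eval (S := ℂ) n f, hfac] at hT1
    rw [div_eq_div_iff (mul_ne_zero (mul_ne_zero (mul_ne_zero hE (hEj n))
        (mul_ne_zero hF (hFj n))) (mul_ne_zero hq hm))
      (mul_ne_zero (pow_ne_zero 2 hN) hm)] at hT1
    have hT2 : (ascPochhammer ℂ (n+1)).eval a * (ascPochhammer ℂ (n+1)).eval b *
        (ascPochhammer ℂ (n+1)).eval c * (n:ℂ)^2
        = Q n * ((ascPochhammer ℂ n).eval e * (e+(n:ℂ)) *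
            ((ascPochhammer ℂ n).eval f * (f+(n:ℂ))) * (Nat.factorial n : ℂ)) := by
      apply mul_right_cancel₀ hm
      linear_combination hT1
    rw [key_sum a b c e f habc hEj hFj hstep n]
    rw [div_eq_div_iff
      (mul_ne_zero (mul_ne_zero (mul_ne_zero habc hE) hF) hq)
      (mul_ne_zero (pow_ne_zero 2 hN) habc)]
    linear_combination (a*b*c) * hT2
  -- limit of the partial sums
  have h1t : Filter.Tendsto (fun n : ℕ => e*((n:ℂ))⁻¹+1) atTop (nhds 1) := by
    have := (cinv_tendsto.const_mul e).add (tendsto_const_nhds (x := (1:ℂ)))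
    simpa using this
  have h2t : Filter.Tendsto (fun n : ℕ => f*((n:ℂ))⁻¹+1) atTop (nhds 1) := by
    have := (cinv_tendsto.const_mul f).add (tendsto_const_nhds (x := (1:ℂ)))
    simpa using this
  have base : Filter.Tendsto (fun n : ℕ => Q n * (e*((n:ℂ))⁻¹+1) * (f*((n:ℂ))⁻¹+1) / (a*b*c))
      atTop (nhds (G * 1 * 1 / (a*b*c))) := ((hQ.mul h1t).mul h2t).div_const _
  have SL : Filter.Tendsto (fun n : ℕ => ∑ k ∈ range (n+1), T k) atTop
      (nhds (G * 1 * 1 / (a*b*c))) := by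
    apply base.congr'
    filter_upwards [Filter.eventually_ge_atTop 1] with n hn
    rw [hsum_eq n hn]
    have hN : (n:ℂ) ≠ 0 := Nat.cast_ne_zero.mpr (by omega)
    have he' : e*((n:ℂ))⁻¹+1 = (e+(n:ℂ))/(n:ℂ) := by field_simp
    have hf' : f*((n:ℂ))⁻¹+1 = (f+(n:ℂ))/(n:ℂ) := by field_simp
    rw [he', hf']
    have hgen : ∀ X Y Z D : ℂ, X * (Y/(n:ℂ)) * (Z/(n:ℂ)) / D = X*Y*Z/((n:ℂ)^2*D) := by
      intro X Y Z D
      rw [← div_div]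
      congr 1
      rw [mul_div_assoc' X Y ((n:ℂ)), div_mul_div_comm, ← sq]
    rw [hgen]
  -- summability
  have hQnorm : ∀ᶠ n : ℕ in Filter.atTop, ‖Q n‖ ≤ ‖G‖ + 1 :=
    hQ.norm.eventually (eventually_le_nhds (lt_add_one ‖G‖))
  have hbound : ∀ᶠ n : ℕ in Filter.atTop, ‖T (n+1)‖ ≤ (‖G‖+1) * (((n:ℝ)^3)⁻¹) := by
    filter_upwards [hQnorm, Filter.eventually_ge_atTop 1] with n hQn hn
    have hnR : (0:ℝ) < (n:ℝ) := by
      have : 0 < n := by omega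
      exact_mod_cast this
    rw [hTn n hn, norm_div]
    have hden : ‖(n:ℂ)^2*((n:ℂ)+1)‖ = (n:ℝ)^2*((n:ℝ)+1) := by
      rw [norm_mul, norm_pow, Complex.norm_natCast]
      congr 1
      have : ((n:ℂ)+1) = ((n+1:ℕ):ℂ) := by push_cast; ring
      rw [this, Complex.norm_natCast]; push_cast; ring
    rw [hden]
    calc ‖Q n‖/((n:ℝ)^2*((n:ℝ)+1)) ≤ (‖G‖+1)/((n:ℝ)^3) := by
          apply div_le_div₀ (by positivity) hQn (by positivity)
          nlinarith [sq_nonneg (n:ℝ)]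
      _ = (‖G‖+1) * (((n:ℝ)^3)⁻¹) := by rw [div_eq_mul_inv]
  have hsT1 : Summable (fun n : ℕ => T (n+1)) :=
    Summable.of_norm_bounded_eventually_nat
      ((Real.summable_nat_pow_inv.mpr (by norm_num : 1 < 3)).mul_left (‖G‖+1)) hbound
  have hsT : Summable T := (summable_nat_add_iff 1).mp hsT1
  -- conclude the value of the tsum
  have ht2 : Filter.Tendsto (fun n : ℕ => ∑ k ∈ range (n+1), T k) atTop
      (nhds (∑' k, T k)) := by
    have := hsT.hasSum.tendsto_sum_nat
    exact this.comp (tendsto_add_atTop_nat 1)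
  have hval : (∑' k, T k) = G * 1 * 1 / (a*b*c) := tendsto_nhds_unique ht2 SL
  have hlhs : hyp3F2 a b c e f = ∑' k, T k := rfl
  rw [hlhs, hval, prodid, Complex.Gamma_add_one b hb, Complex.Gamma_add_one c hc, hG_def]
  have hGa : Complex.Gamma a ≠ 0 := Complex.Gamma_ne_zero g1
  have hGb : Complex.Gamma b ≠ 0 := Complex.Gamma_ne_zero hbn
  have hGc : Complex.Gamma c ≠ 0 := Complex.Gamma_ne_zero hcn
  rw [mul_one, mul_one, div_div,
    div_eq_div_iff (mul_ne_zero hGabc habc)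
      (mul_ne_zero (mul_ne_zero (mul_ne_zero hne (mul_ne_zero hb hGb)) (mul_ne_zero hc hGc)) hGa)]
  ring
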